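/- Splitting lemma for edit distance via min-plus: let d(i,j+1,i',j'+1) denote the edit distance between substrings s1[i..j] and s2[i'..j']. Then for any k with i ≤ k ≤ j, d(i,j+1,i',j'+1) = min over k' with i'-1 ≤ k' ≤ j' of ( d(i,k+1,i',k'+1) + d(k+1,j+1,k'+1,j'+1) ). -/

import Mathlib

namespace Levenshtein

/-- Costs of the edit operations (as in the removed `Mathlib.Data.List.EditDistance.Defs`). -/
structure Cost (α β δ : Type*) where
  delete : α → δ
  insert : β → δ
  substitute : α → β → δ

/-- The default cost: every operation costs 1, substituting equal letters costs 0. -/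
def defaultCost {α : Type*} [DecidableEq α] : Cost α α ℕ where
  delete _ := 1
  insert _ := 1
  substitute a b := if a = b then 0 else 1

end Levenshtein

/-- The Levenshtein distance with cost `C`, by the recursion Mathlib's removed
`levenshtein` satisfied (`levenshtein_nil_nil`, `_nil_cons`, `_cons_nil`, `_cons_cons`). -/
def levenshtein {α β δ : Type*} [AddZeroClass δ] [Min δ] (C : Levenshtein.Cost α β δ) :
    List α → List β → δ
  | [], [] => 0
  | [], y :: ys => C.insert y + levenshtein C [] ys
  | x :: xs, [] => C.delete x + levenshtein C xs []
  | x :: xs, y :: ys =>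
    min (C.delete x + levenshtein C xs (y :: ys))
      (min (C.insert y + levenshtein C (x :: xs) ys) (C.substitute x y + levenshtein C xs ys))

/-- The edit (Levenshtein) distance between two strings. -/
def edit {α : Type*} [DecidableEq α] (s t : List α) : ℕ :=
  levenshtein Levenshtein.defaultCost s t

/-- The substring `s[a..b-1]` (half-open, 0-indexed): `d(i,j+1,i',j'+1)` of the paper
is `edit (sub s1 i (j+1)) (sub s2 i' (j'+1))`. -/
def sub {α : Type*} (s : List α) (a b : ℕ) : List α := (s.drop a).take (b - a)

set_option linter.unusedSectionVars false

section Aux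

variable {α : Type*} [DecidableEq α]

lemma edit_nil_left (t : List α) : edit [] t = t.length := by
  induction t with
  | nil => simp [edit, levenshtein]
  | cons b t ih => simp [edit, levenshtein, Levenshtein.defaultCost] at *; omega

lemma edit_nil_right (s : List α) : edit s [] = s.length := by
  induction s with
  | nil => simp [edit, levenshtein]
  | cons a s ih => simp [edit, levenshtein, Levenshtein.defaultCost] at *; omega

lemma edit_cons_cons (a : α) (x : List α) (b : α) (z : List α) :
    edit (a :: x) (b :: z) =
      min (1 + edit x (b :: z))
        (min (1 + edit (a :: x) z) ((if a = b then 0 else 1) + edit x z)) := by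
  simp [edit, levenshtein, Levenshtein.defaultCost]

lemma edit_le_insert (x : List α) (b : α) (z : List α) : edit x (b :: z) ≤ 1 + edit x z := by
  cases x with
  | nil => simp [edit, levenshtein, Levenshtein.defaultCost]
  | cons a x => rw [edit_cons_cons]; omega

lemma edit_le_delete (a : α) (x z : List α) : edit (a :: x) z ≤ 1 + edit x z := by
  cases z with
  | nil => simp [edit, levenshtein, Levenshtein.defaultCost]
  | cons b z => rw [edit_cons_cons]; omega

lemma edit_le_subst (a : α) (x : List α) (b : α) (z : List α) :
    edit (a :: x) (b :: z) ≤ (if a = b then 0 else 1) + edit x z := by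
  rw [edit_cons_cons]; omega

lemma edit_append_le (x y u v : List α) : edit (x ++ y) (u ++ v) ≤ edit x u + edit y v := by
  generalize hn : x.length + u.length = n
  induction n using Nat.strong_induction_on generalizing x u with
  | _ n ih =>
  subst hn
  match x, u with
  | [], [] => simp
  | [], b :: u =>
      have h1 := edit_le_insert y b (u ++ v)
      have h2 := ih ([].length + u.length)
        (by simp only [List.length_nil, List.length_cons]; omega) [] u rfl
      have h3 := edit_nil_left (b :: u)
      have h4 := edit_nil_left u
      simp only [List.nil_append, List.cons_append, List.length_cons] at h2 h3 h4 ⊢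
      omega
  | a :: x, [] =>
      have h1 := edit_le_delete a (x ++ y) v
      have h2 := ih (x.length + [].length)
        (by simp only [List.length_nil, List.length_cons]; omega) x [] rfl
      have h3 := edit_nil_right (a :: x)
      have h4 := edit_nil_right x
      simp only [List.nil_append, List.cons_append, List.length_cons] at h2 h3 h4 ⊢
      omega
  | a :: x, b :: u =>
      have h1 := ih (x.length + (b :: u).length)
        (by simp only [List.length_nil, List.length_cons]; omega) x (b :: u) rfl
      have h2 := ih ((a :: x).length + u.length)
        (by simp only [List.length_nil, List.length_cons]; omega) (a :: x) u rfl
      have h3 := ih (x.length + u.length)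
        (by simp only [List.length_nil, List.length_cons]; omega) x u rfl
      have e1 : (a :: x) ++ y = a :: (x ++ y) := rfl
      have e2 : (b :: u) ++ v = b :: (u ++ v) := rfl
      rw [e1, e2, edit_cons_cons, edit_cons_cons]
      rw [e2] at h1
      rw [e1] at h2
      omega

lemma edit_exists_split (x y t : List α) :
    ∃ m ≤ t.length, edit x (t.take m) + edit y (t.drop m) ≤ edit (x ++ y) t := by
  generalize hn : x.length + t.length = n
  induction n using Nat.strong_induction_on generalizing x t with
  | _ n ih =>
  subst hn
  match x, t with
  | [], t =>
      exact ⟨0, Nat.zero_le _, by simp [edit_nil_left]⟩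
  | a :: x, [] =>
      refine ⟨0, le_refl _, ?_⟩
      simp only [List.take_nil, List.drop_nil, edit_nil_right, List.length_append,
        List.length_cons]
      omega
  | a :: x, b :: t =>
      obtain ⟨m1, hm1, h1⟩ := ih (x.length + (b :: t).length)
        (by simp only [List.length_nil, List.length_cons]; omega) x (b :: t) rfl
      obtain ⟨m2, hm2, h2⟩ := ih ((a :: x).length + t.length)
        (by simp only [List.length_nil, List.length_cons]; omega) (a :: x) t rfl
      obtain ⟨m3, hm3, h3⟩ := ih (x.length + t.length)
        (by simp only [List.length_nil, List.length_cons]; omega) x t rfl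
      have e1 : (a :: x) ++ y = a :: (x ++ y) := rfl
      rw [e1, edit_cons_cons]
      set A := 1 + edit (x ++ y) (b :: t) with hA
      set B := 1 + edit (a :: (x ++ y)) t with hB
      set Cc := (if a = b then 0 else 1) + edit (x ++ y) t with hC
      have hcase : min A (min B Cc) = A ∨ min A (min B Cc) = B ∨ min A (min B Cc) = Cc := by
        omega
      rcases hcase with h | h | h
      · refine ⟨m1, by simpa using hm1, ?_⟩
        have hd := edit_le_delete a x ((b :: t).take m1)
        rw [h, hA]
        omega
      · refine ⟨m2 + 1, by simpa using hm2, ?_⟩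
        have hi := edit_le_insert (a :: x) b (t.take m2)
        rw [h, hB]
        simp only [List.take_succ_cons, List.drop_succ_cons]
        rw [e1] at h2
        omega
      · refine ⟨m3 + 1, by simpa using hm3, ?_⟩
        have hs := edit_le_subst a x b (t.take m3)
        rw [h, hC]
        simp only [List.take_succ_cons, List.drop_succ_cons]
        omega

lemma sub_append (s : List α) {a b c : ℕ} (hab : a ≤ b) (hbc : b ≤ c) :
    sub s a b ++ sub s b c = sub s a c := by
  unfold sub
  rw [show s.drop b = (s.drop a).drop (b - a) by rw [List.drop_drop]; congr 1; omega,
    show c - a = (b - a) + (c - b) by omega, List.take_add]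

lemma sub_take (s : List α) {a b m : ℕ} (h : m ≤ b - a) :
    (sub s a b).take m = sub s a (a + m) := by
  unfold sub
  rw [List.take_take, show a + m - a = m by omega, min_eq_left h]

lemma sub_drop (s : List α) (a b m : ℕ) :
    (sub s a b).drop m = sub s (a + m) b := by
  unfold sub
  rw [List.drop_take, List.drop_drop, show b - a - m = b - (a + m) by omega]

end Aux

/-- Splitting lemma for edit distance: for any split point `k` with `i ≤ k ≤ j`,
`d(i,j+1,i',j'+1)` equals the minimum over all split points `k'` with
`i'-1 ≤ k' ≤ j'` of `d(i,k+1,i',k'+1) + d(k+1,j+1,k'+1,j'+1)`.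
(Here `k''` ranges over `[i', j'+1]`, with `k'' = k' + 1`.) -/
theorem edit_split {α : Type*} [DecidableEq α] (s1 s2 : List α) (i j i' j' k : ℕ)
    (hik : i ≤ k) (hkj : k ≤ j) (hi'j' : i' ≤ j' + 1) :
    edit (sub s1 i (j + 1)) (sub s2 i' (j' + 1)) =
      (Finset.Icc i' (j' + 1)).inf' (Finset.nonempty_Icc.mpr hi'j')
        (fun k'' => edit (sub s1 i (k + 1)) (sub s2 i' k'') +
          edit (sub s1 (k + 1) (j + 1)) (sub s2 k'' (j' + 1))) := by
  have hx : sub s1 i (j + 1) = sub s1 i (k + 1) ++ sub s1 (k + 1) (j + 1) :=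
    (sub_append s1 (by omega) (by omega)).symm
  apply le_antisymm
  · apply Finset.le_inf'
    intro k'' hk''
    simp only [Finset.mem_Icc] at hk''
    rw [hx, ← sub_append s2 hk''.1 hk''.2]
    exact edit_append_le _ _ _ _
  · obtain ⟨m, hm, hle⟩ :=
      edit_exists_split (sub s1 i (k + 1)) (sub s1 (k + 1) (j + 1)) (sub s2 i' (j' + 1))
    have hmlen : m ≤ j' + 1 - i' := le_trans hm (by simp only [sub, List.length_take]; omega)
    refine le_trans (Finset.inf'_le _ (b := i' + m) (by simp only [Finset.mem_Icc]; omega)) ?_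
    rw [show sub s2 i' (i' + m) = (sub s2 i' (j' + 1)).take m from (sub_take s2 hmlen).symm,
      show sub s2 (i' + m) (j' + 1) = (sub s2 i' (j' + 1)).drop m from (sub_drop s2 _ _ _).symm,
      hx]
    exact hle
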